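/- arXiv:1104.0226 — 2 statements merged into one kernel-verified Lean document; each statement's English description precedes it below -/
import Mathlib

section
/- Let $A$ be a finite-dimensional self-injective algebra over an algebraically closed field $k$, let $P = Ae$ be an indecomposable projective left ideal for a primitive idempotent $e$, and let $u$ be a nonzero element of the socle of $P$ (so $Au$ is the simple socle of $P$). If $M$ is a finite-dimensional $A$-module with $uM \neq 0$, then $M$ has a direct summand isomorphic to $P$. -/
/-!
STATEMENT 0: Let `A` be a finite-dimensional self-injective algebra over an
algebraically closed field `k`, let `P = Ae` be an indecomposable projective left
ideal for a primitive idempotent `e`, and let `u` be a nonzero element of the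
socle of `P` (so `Au` is the simple socle of `P`).  If `M` is a
finite-dimensional `A`-module with `uM ≠ 0`, then `M` has a direct summand
isomorphic to `P`.
-/

theorem summand_of_socle_smul_ne_zero
    {k A : Type} [Field k] [IsAlgClosed k] [Ring A] [Algebra k A]
    [FiniteDimensional k A]
    -- `A` is self-injective: projective and injective `A`-modules coincide
    (self_inj : ∀ (N : Type) [AddCommGroup N] [Module A N],
      Module.Projective A N ↔ Module.Injective A N)
    (e : A) (he : IsIdempotentElem e)
    -- `e` is a primitive idempotent (so `P = Ae` is indecomposable projective)
    (hprim : e ≠ 0)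
    (hprim' : ∀ a b : A, IsIdempotentElem a → IsIdempotentElem b →
      a * b = 0 → b * a = 0 → a + b = e → a = 0 ∨ b = 0)
    (u : A) (hu0 : u ≠ 0)
    -- `u` lies in `P = Ae`
    (huP : u ∈ Submodule.span A ({e} : Set A))
    -- `Au` is simple and is the socle of `P`:
    -- every simple submodule of `P` equals `Au`
    (husimple : IsSimpleModule A ↥(Submodule.span A ({u} : Set A)))
    (hsoc : ∀ N : Submodule A A, N ≤ Submodule.span A ({e} : Set A) →
      IsSimpleModule A ↥N → N = Submodule.span A ({u} : Set A))
    (M : Type) [AddCommGroup M] [Module A M] [Module k M]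
    [IsScalarTower k A M] [FiniteDimensional k M]
    -- `uM ≠ 0`
    (huM : ∃ m : M, u • m ≠ 0) :
    ∃ (N N' : Submodule A M), IsCompl N N' ∧
      Nonempty (↥N ≃ₗ[A] ↥(Submodule.span A ({e} : Set A))) := by
  obtain ⟨m, hm⟩ := huM
  set P : Submodule A A := Submodule.span A ({e} : Set A) with hP
  -- elements of P are fixed by right multiplication by e
  have hPe : ∀ x ∈ P, x * e = x := by
    intro x hx
    rw [hP, Submodule.mem_span_singleton] at hx
    obtain ⟨a, rfl⟩ := hx
    show a * e * e = a * e
    rw [mul_assoc, he]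
  -- P is projective
  have hmemP : ∀ a : A, a * e ∈ P := fun a =>
    Submodule.mem_span_singleton.2 ⟨a, rfl⟩
  let s : A →ₗ[A] ↥P :=
    LinearMap.codRestrict P (LinearMap.toSpanSingleton A A e) hmemP
  have hproj : Module.Projective A ↥P := by
    refine Module.Projective.of_split P.subtype s ?_
    ext x
    show (x : A) * e = (x : A)
    exact hPe x x.2
  have hinj : Module.Injective A ↥P := (self_inj ↥P).1 hproj
  -- the map f : P → M, x ↦ x • m, is injective
  let f : ↥P →ₗ[A] M := (LinearMap.toSpanSingleton A M m).comp P.subtype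
  have hker : LinearMap.ker f = ⊥ := by
    by_contra hK
    have hA : IsArtinian A A := isArtinian_of_tower k inferInstance
    have : IsAtomic (Submodule A A) :=
      isAtomic_of_orderBot_wellFounded_lt wellFounded_lt
    set K : Submodule A A := Submodule.map P.subtype (LinearMap.ker f) with hKdef
    have hKne : K ≠ ⊥ := by
      intro h
      apply hK
      rw [Submodule.eq_bot_iff] at h ⊢
      intro x hx
      have : (x : A) = 0 := h _ ⟨x, hx, rfl⟩
      exact Subtype.ext this
    obtain ⟨N, hNatom, hNK⟩ := (IsAtomic.eq_bot_or_exists_atom_le K).resolve_left hKne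
    have hNP : N ≤ P := hNK.trans (Submodule.map_subtype_le _ _)
    have hNsimple : IsSimpleModule A ↥N := isSimpleModule_iff_isAtom.2 hNatom
    have hNu : N = Submodule.span A ({u} : Set A) := hsoc N hNP hNsimple
    have huK : u ∈ K := hNK (hNu ▸ Submodule.mem_span_singleton_self u)
    obtain ⟨x, hx, hxu⟩ := huK
    apply hm
    have : f x = 0 := hx
    rw [← hxu]
    exact this
  have hfinj : Function.Injective f := LinearMap.ker_eq_bot.1 hker
  -- extend the identity of P along f
  obtain ⟨g, hg⟩ := hinj.out f hfinj LinearMap.id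
  refine ⟨LinearMap.range f, LinearMap.ker g, ⟨?_, ?_⟩,
    ⟨(LinearEquiv.ofInjective f hfinj).symm⟩⟩
  · rw [Submodule.disjoint_def]
    rintro x ⟨y, rfl⟩ hx
    have : g (f y) = 0 := hx
    rw [hg y] at this
    rw [show y = 0 from this, map_zero]
  · rw [codisjoint_iff, eq_top_iff]
    intro x _
    have h1 : f (g x) ∈ LinearMap.range f := ⟨g x, rfl⟩
    have h2 : x - f (g x) ∈ LinearMap.ker g := by
      simp [map_sub, hg (g x)]
    have : x = f (g x) + (x - f (g x)) := by abel
    rw [this]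
    exact Submodule.add_mem_sup h1 h2
end

section
/- Let $A$ be a finite-dimensional $k$-algebra generated by elements $a_1,\dots,a_t$, let $n \geq 1$, and let $\mathcal{V}_n$ be the affine variety of $n$-dimensional representations of $A$ (points are $t$-tuples of $n\times n$ matrices satisfying the defining relations of $A$). Fix a finite-dimensional $A$-module $M$, an indecomposable projective $A$-module $P$ over a self-injective cocommutative Hopf algebra $A$, and an integer $s \geq 0$. Then the set $\mathcal{W}$ of representations $\sigma \in \mathcal{V}_n$ such that $M \otimes L_\sigma$ contains no submodule isomorphic to $P^{\oplus s}$ is Zariski-closed in $\mathcal{V}_n$. -/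
/-!
STATEMENT 15: Let `A` be a finite-dimensional self-injective cocommutative Hopf
`k`-algebra generated by `a_1, …, a_t`, let `n ≥ 1`, and let `𝒱_n` be the
variety of `n`-dimensional representations of `A` (tuples of `n × n` matrices
satisfying the defining relations of `A`).  Fix a finite-dimensional
`A`-module `M`, an indecomposable projective `A`-module `P`, and `s ≥ 0`.
Then the set of representations `σ ∈ 𝒱_n` such that `M ⊗ L_σ` contains no
submodule isomorphic to `P^{⊕ s}` is Zariski-closed in `𝒱_n`.
-/

open TensorProduct

section EndoTrivInfra

variable {k : Type} [CommRing k] {A : Type} [Ring A] [HopfAlgebra k A]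
variable {V W : Type} [AddCommGroup V] [Module k V] [AddCommGroup W] [Module k W]

/-- The representation of `A` on `V ⊗ W` obtained from representations on `V` and
`W` via the comultiplication of the Hopf algebra `A` (diagonal action). -/
noncomputable def tensorRep (ρ : A →ₗ[k] Module.End k V) (σ : A →ₗ[k] Module.End k W) :
    A →ₗ[k] Module.End k (V ⊗[k] W) :=
  (TensorProduct.lift ((TensorProduct.mapBilinear (RingHom.id k) V W V W).compl₁₂ ρ σ)).comp
    (Coalgebra.comul (R := k) (A := A))

/-- The contragredient (dual) representation, via the antipode. -/
noncomputable def dualRep (ρ : A →ₗ[k] Module.End k V) :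
    A →ₗ[k] Module.End k (Module.Dual k V) :=
  (Module.Dual.transpose (R := k)).comp (ρ.comp (HopfAlgebra.antipode (R := k)))

/-- Conjugation `(f, g) ↦ (h ↦ f ∘ h ∘ g)` as a bilinear map. -/
noncomputable def conjBil :
    Module.End k V →ₗ[k] Module.End k V →ₗ[k] Module.End k (V →ₗ[k] V) :=
  LinearMap.mk₂ k (fun f g => (LinearMap.llcomp k V V V f).comp (LinearMap.lcomp k V g))
    (by intros f f' g; ext h v; simp)
    (by intros c f g; ext h v; simp)
    (by intros f g g'; ext h v; simp [map_add])
    (by intros c f g; ext h v; simp [map_smul])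

/-- The representation of `A` on `Hom_k(V, V)` given by
`a • f = Σ ρ(a₁) ∘ f ∘ ρ(S(a₂))` (comultiplication and antipode). -/
noncomputable def homRep (ρ : A →ₗ[k] Module.End k V) :
    A →ₗ[k] Module.End k (V →ₗ[k] V) :=
  (TensorProduct.lift (conjBil.compl₁₂ ρ (ρ.comp (HopfAlgebra.antipode (R := k))))).comp
    (Coalgebra.comul (R := k) (A := A))

/-- The trivial (one-dimensional) representation, via the counit. -/
noncomputable def trivialRep : A →ₗ[k] Module.End k k :=
  (Coalgebra.counit (R := k) (A := A)).smulRight (LinearMap.id : k →ₗ[k] k)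

/-- Direct sum of two representations. -/
noncomputable def prodRep (ρ : A →ₗ[k] Module.End k V) (σ : A →ₗ[k] Module.End k W) :
    A →ₗ[k] Module.End k (V × W) :=
  (LinearMap.prodMapLinear k V W V W k).comp (ρ.prod σ)

/-- Isomorphism of representations. -/
def RepIso (ρ : A →ₗ[k] Module.End k V) (σ : A →ₗ[k] Module.End k W) : Prop :=
  ∃ e : V ≃ₗ[k] W, ∀ (a : A) (v : V), e (ρ a v) = σ a (e v)

/-- An algebra-homomorphism representation (i.e. an honest module structure)
is projective if the corresponding module is projective. -/
def RepProjective {P : Type} [AddCommGroup P] [Module k P]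
    (τ : A →ₐ[k] Module.End k P) : Prop :=
  letI : Module A P := Module.compHom P τ.toRingHom
  Module.Projective A P

/-- `ρ` is an endotrivial representation: `Hom_k(V,V) ≅ k ⊕ (projective)` as
`A`-modules, where `Hom_k(V,V)` carries the action `homRep ρ` and `k` is
trivial via the counit. -/
noncomputable def IsEndotrivialRep (ρ : A →ₗ[k] Module.End k V) : Prop :=
  ∃ (m : ℕ) (τ : A →ₐ[k] Module.End k (Fin m → k)),
    RepProjective τ ∧
    ∃ e : (V →ₗ[k] V) ≃ₗ[k] k × (Fin m → k),
      ∀ (a : A) (f : V →ₗ[k] V),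
        e (homRep ρ a f) = (Coalgebra.counit a * (e f).1, τ a ((e f).2))

end EndoTrivInfra

/-- Zariski-closed subsets of affine space `ι → k`: common zero sets of
families of polynomials. -/
def IsZariskiClosed {k ι : Type} [CommSemiring k] (s : Set (ι → k)) : Prop :=
  ∃ T : Set (MvPolynomial ι k),
    s = {x | ∀ p ∈ T, MvPolynomial.eval x p = 0}

/-- The coordinates of a tuple of matrices, as a point of affine space. -/
def matCoords {k : Type} (t n : ℕ) (σ : Fin t → Matrix (Fin n) (Fin n) k) :
    Fin t × Fin n × Fin n → k :=
  fun x => σ x.1 x.2.1 x.2.2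


section Minors
variable {k : Type} [Field k]

open Matrix

lemma my_submatrix_eq_mul {m : Type} [Fintype m] [DecidableEq m] {s : ℕ}
    (M : Matrix m m k) (f g : Fin s → m) :
    M.submatrix f g =
      ((1 : Matrix m m k).submatrix f id) * M * ((1 : Matrix m m k).submatrix id g) := by
  ext a b
  simp only [Matrix.mul_apply, Matrix.submatrix_apply, Matrix.one_apply, id_eq]
  rw [Finset.sum_eq_single (g b)]
  · rw [Finset.sum_eq_single (f a)]
    · simp
    · intro j _ hj; simp [Ne.symm hj]
    · simp
  · intro j _ hj; simp [hj]
  · simp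

lemma my_rank_submatrix_le {m : Type} [Fintype m] [DecidableEq m] {s : ℕ}
    (M : Matrix m m k) (f g : Fin s → m) :
    (M.submatrix f g).rank ≤ M.rank := by
  rw [my_submatrix_eq_mul M f g]
  refine le_trans (le_trans (Matrix.rank_mul_le _ _) inf_le_left) ?_
  exact le_trans (Matrix.rank_mul_le _ _) inf_le_right

lemma my_exists_indep_cols {q m : Type} [Fintype q] [Fintype m]
    (M : Matrix q m k) (s : ℕ) (h : s ≤ M.rank) :
    ∃ g : Fin s → m, LinearIndependent k (fun a => fun i => M i (g a)) := by
  rw [Matrix.rank_eq_finrank_span_cols] at h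
  obtain ⟨b, hbsub, hbspan, hbind⟩ := exists_linearIndependent k (Set.range M.transpose)
  have hbfin : b.Finite := hbind.setFinite
  haveI := hbfin.fintype
  have hcard : s ≤ Fintype.card b := by
    rw [← Set.toFinset_card, ← finrank_span_set_eq_card hbind, hbspan]
    exact h
  obtain ⟨e⟩ : Nonempty (Fin s ↪ b) := by
    apply Function.Embedding.nonempty_iff_card_le.mpr
    simpa using hcard
  have hv : ∀ a : Fin s, (e a).1 ∈ Set.range M.transpose := fun a => hbsub (e a).2
  choose g hg using hv
  refine ⟨g, ?_⟩
  have : (fun a => fun i => M i (g a)) = fun a => (e a).1 := by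
    funext a; rw [← hg a]; rfl
  rw [this]
  exact hbind.comp _ e.injective

lemma my_rank_lt_iff_minors {m : Type} [Fintype m] [DecidableEq m]
    (M : Matrix m m k) (s : ℕ) :
    M.rank < s ↔ ∀ f g : Fin s → m, (M.submatrix f g).det = 0 := by
  constructor
  · intro h f g
    by_contra hd
    have h1 : (M.submatrix f g).rank = s := by
      rw [Matrix.rank_of_isUnit _ ((Matrix.isUnit_iff_isUnit_det _).mpr
        (isUnit_iff_ne_zero.mpr hd))]
      simp
    have h2 := my_rank_submatrix_le M f g
    omega
  · intro h
    by_contra h'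
    push_neg at h'
    obtain ⟨g, hg⟩ := my_exists_indep_cols M s h'
    set M₂ : Matrix (Fin s) m k := (M.submatrix id g)ᵀ with hM₂
    have hr2 : s ≤ M₂.rank := by
      rw [hM₂, Matrix.rank_transpose, Matrix.rank_eq_finrank_span_cols]
      have he : (M.submatrix id g).col = fun a => fun i => M i (g a) := by
        funext a i; rfl
      rw [he, finrank_span_eq_card hg]
      simp
    obtain ⟨f, hf⟩ := my_exists_indep_cols M₂ s hr2
    have hrows : LinearIndependent k (fun a => (M.submatrix f g) a) := by
      have : (fun a => (M.submatrix f g) a) = (fun a => fun i => M₂ i (f a)) := by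
        funext a b; rfl
      rw [this]; exact hf
    have hu : IsUnit (M.submatrix f g) := Matrix.linearIndependent_rows_iff_isUnit.mp hrows
    have := (Matrix.isUnit_iff_isUnit_det _).mp hu
    rw [h f g] at this
    exact (not_isUnit_zero : ¬ IsUnit (0:k)) this

end Minors

section Core

variable {k : Type} [Field k]
variable {A : Type} [Ring A] [Algebra k A]
variable {P : Type} [AddCommGroup P] [Module k P] [Module A P] [IsScalarTower k A P]
  [FiniteDimensional k P]

/-- `k`-dimension of an `A`-submodule. -/
noncomputable def fdim (K : Submodule A P) : ℕ :=
  Module.finrank k (K.restrictScalars k)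

lemma fdim_le_of_le {K L : Submodule A P} (h : K ≤ L) : fdim (k := k) K ≤ fdim (k := k) L :=
  Submodule.finrank_mono (fun x hx => h hx)

lemma fdim_le (K : Submodule A P) : fdim (k := k) K ≤ Module.finrank k P :=
  Submodule.finrank_le _

lemma eq_of_le_of_fdim_le {K L : Submodule A P} (h : K ≤ L)
    (h2 : fdim (k := k) L ≤ fdim (k := k) K) : K = L := by
  have : K.restrictScalars k = L.restrictScalars k :=
    Submodule.eq_of_le_of_finrank_le (fun x hx => h hx) h2
  exact Submodule.restrictScalars_injective k A P this

lemma fdim_pos {K : Submodule A P} (h : K ≠ ⊥) : 0 < fdim (k := k) K := by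
  have hne : K.restrictScalars k ≠ ⊥ := by
    intro hc
    exact h (Submodule.restrictScalars_injective k A P (by simpa using hc))
  have : Nontrivial (K.restrictScalars k) := Submodule.nontrivial_iff_ne_bot.mpr hne
  exact Module.finrank_pos_iff.mpr this

lemma fdim_lt_of_lt {K L : Submodule A P} (h : K < L) : fdim (k := k) K < fdim (k := k) L := by
  apply Submodule.finrank_lt_finrank_of_lt
  exact lt_of_le_of_ne (fun x hx => h.le hx)
    (fun he => h.ne (Submodule.restrictScalars_injective k A P he))

include k in
/-- Every nonzero submodule contains a minimal nonzero submodule. -/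
lemma exists_minimal_submodule (L : Submodule A P) (hL : L ≠ ⊥) :
    ∃ S : Submodule A P, S ≤ L ∧ S ≠ ⊥ ∧
      ∀ K : Submodule A P, K ≤ S → K ≠ ⊥ → K = S := by
  classical
  have hQ : ∃ d : ℕ, ∃ K : Submodule A P, K ≤ L ∧ K ≠ ⊥ ∧ fdim (k := k) K = d :=
    ⟨fdim (k := k) L, L, le_rfl, hL, rfl⟩
  obtain ⟨S, hSL, hS0, hSd⟩ := Nat.find_spec hQ
  refine ⟨S, hSL, hS0, fun K hKS hK0 => ?_⟩
  have h1 : Nat.find hQ ≤ fdim (k := k) K :=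
    Nat.find_min' hQ ⟨K, le_trans hKS hSL, hK0, rfl⟩
  have h2 := fdim_le_of_le (k := k) hKS
  exact eq_of_le_of_fdim_le hKS (by omega)

include k in
/-- Fitting-type decomposition for a non-injective endomorphism with a nonzero fixed
vector. -/
lemma fitting_decomp (h : P →ₗ[A] P) (hni : LinearMap.ker h ≠ ⊥)
    {x : P} (hx : x ≠ 0) (hfix : h x = x) :
    ∃ N N' : Submodule A P, IsCompl N N' ∧ N ≠ ⊥ ∧ N' ≠ ⊥ := by
  classical
  -- kernels of powers
  have hmono : ∀ i j : ℕ, i ≤ j → LinearMap.ker (h ^ i) ≤ LinearMap.ker (h ^ j) := by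
    intro i j hij
    induction j with
    | zero => simpa using (Nat.le_zero.mp hij) ▸ le_rfl
    | succ j ihj =>
      rcases Nat.lt_or_ge i (j+1) with hlt | hge
      · refine le_trans (ihj (Nat.lt_succ_iff.mp hlt)) ?_
        intro y hy
        simp only [LinearMap.mem_ker] at hy ⊢
        rw [pow_succ']
        simp [Module.End.mul_apply, hy]
      · have : i = j + 1 := le_antisymm hij hge
        subst this; exact le_rfl
  -- find a stabilization point
  have hstab : ∃ j : ℕ, LinearMap.ker (h ^ j) = LinearMap.ker (h ^ (j+1)) := by
    by_contra hcon
    push_neg at hcon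
    have hstr : ∀ j : ℕ, j ≤ fdim (k := k) (LinearMap.ker (h ^ j)) := by
      intro j
      induction j with
      | zero => exact Nat.zero_le _
      | succ j ihj =>
        have hlt : LinearMap.ker (h ^ j) < LinearMap.ker (h ^ (j+1)) :=
          lt_of_le_of_ne (hmono j (j+1) (Nat.le_succ j)) (hcon j)
        have := fdim_lt_of_lt (k := k) hlt
        omega
    have h1 := hstr (Module.finrank k P + 1)
    have h2 := fdim_le (k := k) (LinearMap.ker (h ^ (Module.finrank k P + 1)))
    omega
  obtain ⟨j, hj⟩ := hstab
  -- kernels stabilize from j on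
  have hstab' : ∀ m : ℕ, LinearMap.ker (h ^ (j + m)) = LinearMap.ker (h ^ j) := by
    intro m
    induction m with
    | zero => rfl
    | succ m ihm =>
      refine le_antisymm ?_ (hmono j (j + (m+1)) (by omega))
      intro y hy
      simp only [LinearMap.mem_ker] at hy
      have h1 : h y ∈ LinearMap.ker (h ^ (j + m)) := by
        simp only [LinearMap.mem_ker]
        rw [show j + (m+1) = (j + m) + 1 from rfl, pow_succ] at hy
        simpa [Module.End.mul_apply] using hy
      rw [ihm] at h1
      have h2 : y ∈ LinearMap.ker (h ^ (j+1)) := by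
        simp only [LinearMap.mem_ker] at h1 ⊢
        rw [pow_succ]
        simpa [Module.End.mul_apply] using h1
      rw [← hj] at h2
      exact h2
  set e := j + 1 with he
  have hkere : LinearMap.ker (h ^ e) = LinearMap.ker (h ^ j) := by
    simpa using hstab' 1
  have hker2e : LinearMap.ker (h ^ (e + e)) = LinearMap.ker (h ^ e) := by
    rw [hkere, show e + e = j + (j + 2) by omega]
    exact hstab' (j + 2)
  -- fixed point facts
  have hfixpow : ∀ m : ℕ, (h ^ m) x = x := by
    intro m
    induction m with
    | zero => simp
    | succ m ihm => rw [pow_succ]; simp [Module.End.mul_apply, hfix, ihm]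
  refine ⟨LinearMap.ker (h ^ e), LinearMap.range (h ^ e), ⟨?_, ?_⟩, ?_, ?_⟩
  · -- disjoint
    rw [disjoint_iff]
    rw [eq_bot_iff]
    rintro y ⟨hy1, hy2⟩
    obtain ⟨z, rfl⟩ := hy2
    have : z ∈ LinearMap.ker (h ^ (e + e)) := by
      simp only [LinearMap.mem_ker] at hy1 ⊢
      rw [pow_add]
      simpa [Module.End.mul_apply] using hy1
    rw [hker2e] at this
    simpa using this
  · -- codisjoint
    rw [codisjoint_iff, eq_top_iff]
    have hrange : (LinearMap.range (h ^ e)).restrictScalars k =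
        LinearMap.range ((h ^ e).restrictScalars k) := by
      ext y
      simp only [Submodule.restrictScalars_mem, LinearMap.mem_range,
        LinearMap.coe_restrictScalars]
    have hker : (LinearMap.ker (h ^ e)).restrictScalars k =
        LinearMap.ker ((h ^ e).restrictScalars k) :=
      (LinearMap.ker_restrictScalars _ _).symm
    have hrn := LinearMap.finrank_range_add_finrank_ker ((h ^ e).restrictScalars k)
    have hdisj : (LinearMap.ker (h ^ e)).restrictScalars k ⊓
        (LinearMap.range (h ^ e)).restrictScalars k = ⊥ := by
      rw [eq_bot_iff]
      rintro y ⟨hy1, hy2⟩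
      obtain ⟨z, rfl⟩ := hy2
      have : z ∈ LinearMap.ker (h ^ (e + e)) := by
        simp only [LinearMap.mem_ker] at hy1 ⊢
        rw [pow_add]
        simpa [Module.End.mul_apply] using hy1
      rw [hker2e] at this
      simpa using this
    have hsup := Submodule.finrank_sup_add_finrank_inf_eq
      ((LinearMap.ker (h ^ e)).restrictScalars k)
      ((LinearMap.range (h ^ e)).restrictScalars k)
    rw [hdisj] at hsup
    simp only [finrank_bot, add_zero] at hsup
    have htop : (LinearMap.ker (h ^ e)).restrictScalars k ⊔
        (LinearMap.range (h ^ e)).restrictScalars k = ⊤ := by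
      apply Submodule.eq_top_of_finrank_eq
      rw [hsup, hker, hrange]
      omega
    intro y _
    have : y ∈ (LinearMap.ker (h ^ e)).restrictScalars k ⊔
        (LinearMap.range (h ^ e)).restrictScalars k := htop ▸ Submodule.mem_top
    obtain ⟨a, ha, b, hb, rfl⟩ := Submodule.mem_sup.mp this
    exact Submodule.mem_sup.mpr ⟨a, ha, b, hb, rfl⟩
  · -- ker ≠ ⊥
    intro hbot
    apply hni
    rw [eq_bot_iff]
    refine le_trans ?_ (le_of_eq hbot)
    have : h = h ^ 1 := by simp
    rw [this]
    exact hmono 1 e (by omega)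
  · -- range ≠ ⊥
    intro hbot
    apply hx
    have : (h ^ e) x ∈ LinearMap.range (h ^ e) := LinearMap.mem_range_self _ x
    rw [hbot, hfixpow e] at this
    simpa using this

end Core

section CoreDefs

variable {k : Type} [Field k]
variable {A : Type} [Ring A] [Algebra k A]
variable {P : Type} [AddCommGroup P] [Module k P] [Module A P] [IsScalarTower k A P]

/-- Evaluation at a fixed element, as a `k`-linear map on `Hom_A(P, N)`. -/
def evalAt (N : Type) [AddCommGroup N] [Module k N] [Module A N] [IsScalarTower k A N]
    (sh : P) : (P →ₗ[A] N) →ₗ[k] N where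
  toFun h := h sh
  map_add' h1 h2 := rfl
  map_smul' c h := rfl

/-- The action of `u : A` on `N`, as a `k`-linear endomorphism. -/
def uAct (u : A) (N : Type) [AddCommGroup N] [Module k N] [Module A N]
    [IsScalarTower k A N] : N →ₗ[k] N where
  toFun x := u • x
  map_add' x y := smul_add u x y
  map_smul' c x := (smul_comm c u x).symm

end CoreDefs
section CoreThm

variable {k : Type} [Field k] [IsAlgClosed k]
variable {A : Type} [Ring A] [Algebra k A]
variable {P : Type} [AddCommGroup P] [Module k P] [Module A P] [IsScalarTower k A P]
  [FiniteDimensional k P]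

set_option maxHeartbeats 1000000 in
theorem core_criterion [Nontrivial P]
    (hInj : Module.Injective A P) (hProj : Module.Projective A P)
    (hPind : ∀ N N' : Submodule A P, IsCompl N N' → N = ⊥ ∨ N' = ⊥) :
    ∃ u : A, ∀ (N : Type) [AddCommGroup N] [Module k N] [Module A N]
      [IsScalarTower k A N] [FiniteDimensional k N] (s : ℕ),
      (∃ Φ : (Fin s → P) →ₗ[A] N, Function.Injective Φ) ↔
        s ≤ Module.finrank k (LinearMap.range (uAct (k := k) u N)) := by
  classical
  have htopne : (⊤ : Submodule A P) ≠ ⊥ := by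
    intro hc
    obtain ⟨x, hx⟩ := exists_ne (0 : P)
    have hmem : x ∈ (⊥ : Submodule A P) := hc ▸ Submodule.mem_top
    exact hx (by simpa using hmem)
  obtain ⟨S, -, hS0, hSmin⟩ := exists_minimal_submodule (k := k) (⊤ : Submodule A P) htopne
  have hess : ∀ K : Submodule A P, K ≠ ⊥ → S ≤ K := by
    intro K hK
    obtain ⟨S', hS'K, hS'0, hS'min⟩ := exists_minimal_submodule (k := k) K hK
    by_cases hmeet : S ⊓ S' = ⊥
    · exfalso
      have hf : Function.Injective ((S'.mkQ).comp S.subtype) := by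
        intro x y hxy
        have h1 : (x : P) - y ∈ S' := by
          rw [← Submodule.Quotient.eq]
          exact hxy
        have h2 : (x : P) - y ∈ S ⊓ S' := ⟨S.sub_mem x.2 y.2, h1⟩
        rw [hmeet] at h2
        exact Subtype.ext (by rwa [← sub_eq_zero])
      obtain ⟨h', hh'⟩ := hInj.out ((S'.mkQ).comp S.subtype) hf S.subtype
      set H : P →ₗ[A] P := h'.comp S'.mkQ with hH
      obtain ⟨w, hwS, hw0⟩ := (Submodule.ne_bot_iff S).mp hS0
      have hfix : H w = w := by
        have := hh' ⟨w, hwS⟩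
        simpa [hH] using this
      have hker : LinearMap.ker H ≠ ⊥ := by
        obtain ⟨w', hw'S', hw'0⟩ := (Submodule.ne_bot_iff S').mp hS'0
        intro hc
        have hmem : w' ∈ LinearMap.ker H := by
          simp only [LinearMap.mem_ker, hH, LinearMap.comp_apply]
          rw [show S'.mkQ w' = 0 from (Submodule.Quotient.mk_eq_zero _).mpr hw'S']
          exact map_zero _
        rw [hc] at hmem
        exact hw'0 (by simpa using hmem)
      obtain ⟨N1, N2, hcompl, hN1, hN2⟩ := fitting_decomp (k := k) H hker hw0 hfix
      rcases hPind N1 N2 hcompl with h | h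
      · exact hN1 h
      · exact hN2 h
    · have h1 : S ⊓ S' = S := hSmin _ inf_le_left hmeet
      have h2 : S ⊓ S' = S' := hS'min _ inf_le_right hmeet
      calc S = S ⊓ S' := h1.symm
        _ = S' := h2
        _ ≤ K := hS'K
  obtain ⟨sh, hshS, hsh0⟩ := (Submodule.ne_bot_iff S).mp hS0
  have hKI : ∀ (N : Type) [AddCommGroup N] [Module A N], ∀ (f : P →ₗ[A] N),
      f sh ≠ 0 → Function.Injective f := by
    intro N _ _ f hf
    rw [← LinearMap.ker_eq_bot]
    by_contra hc
    exact hf ((LinearMap.mem_ker).mp (hess _ hc hshS))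
  have hSchur : ∀ r : P →ₗ[A] P, ∃ c : k, ∀ x ∈ S, r x = c • x := by
    intro r
    by_cases hT : Submodule.map r S = ⊥
    · refine ⟨0, fun x hx => ?_⟩
      have h1 : r x ∈ Submodule.map r S := Submodule.mem_map_of_mem hx
      rw [hT] at h1
      simpa using h1
    · have hST : S ≤ Submodule.map r S := hess _ hT
      have hdim : fdim (k := k) (Submodule.map r S) ≤ fdim (k := k) S := by
        have hmap : (Submodule.map r S).restrictScalars k =
            Submodule.map (r.restrictScalars k) (S.restrictScalars k) := by
          ext y
          simp [Submodule.mem_map]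
        rw [fdim, hmap]
        exact Submodule.finrank_map_le _ _
      have hTS : Submodule.map r S = S := (eq_of_le_of_fdim_le hST hdim).symm
      have hrS : ∀ x ∈ S, r x ∈ S := fun x hx => hTS ▸ Submodule.mem_map_of_mem hx
      have hrSk : ∀ x ∈ S.restrictScalars k,
          (r.restrictScalars k) x ∈ S.restrictScalars k := hrS
      set rr : ↥(S.restrictScalars k) →ₗ[k] ↥(S.restrictScalars k) :=
        (r.restrictScalars k).restrict hrSk with hrr
      haveI : Nontrivial ↥(S.restrictScalars k) := by
        apply Submodule.nontrivial_iff_ne_bot.mpr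
        intro hc
        exact hS0 (Submodule.restrictScalars_injective k A P (by simpa using hc))
      obtain ⟨c, hc⟩ := Module.End.exists_eigenvalue rr
      obtain ⟨v, hv⟩ := hc.exists_hasEigenvector
      have hvr : r (v : P) = c • (v : P) := by
        have h1 : rr v = c • v := Module.End.mem_eigenspace_iff.mp hv.1
        have h2 := congrArg (Subtype.val) h1
        simpa [hrr] using h2
      set K : Submodule A P :=
        { carrier := {x | x ∈ S ∧ r x = c • x}
          add_mem' := fun ha hb =>
            ⟨S.add_mem ha.1 hb.1, by rw [map_add, ha.2, hb.2, smul_add]⟩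
          zero_mem' := ⟨S.zero_mem, by simp⟩
          smul_mem' := fun a x hx =>
            ⟨S.smul_mem a hx.1, by rw [map_smul, hx.2, smul_comm]⟩ } with hKdef
      have hK0 : K ≠ ⊥ := by
        intro hcon
        have hmem : (v : P) ∈ K := ⟨v.2, hvr⟩
        rw [hcon] at hmem
        exact hv.2 (Subtype.ext (by simpa using hmem))
      have hKS : K ≤ S := fun x hx => hx.1
      have hKeq : K = S := hSmin K hKS hK0
      exact ⟨c, fun x hx => (hKeq ▸ hx : x ∈ K).2⟩
  -- embed P into A
  haveI : Module.Finite A P := Module.Finite.of_restrictScalars_finite k A P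
  obtain ⟨rn, sg, hsg⟩ := Module.Finite.exists_fin (R := A) (M := P)
  set F : (Fin rn → A) →ₗ[A] P :=
    ∑ i, (LinearMap.toSpanSingleton A P (sg i)).comp (LinearMap.proj i) with hFdef
  have hF : ∀ x, F x = ∑ i, x i • sg i := by
    intro x
    simp [hFdef, LinearMap.sum_apply, LinearMap.toSpanSingleton_apply]
  have hFsurj : Function.Surjective F := by
    rw [← LinearMap.range_eq_top, eq_top_iff, ← hsg, Submodule.span_le]
    rintro _ ⟨i, rfl⟩
    refine ⟨Pi.single i 1, ?_⟩
    rw [hF]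
    simp [Pi.single_apply, ite_smul, Finset.sum_ite_eq']
  obtain ⟨sec, hsec⟩ := Module.projective_lifting_property F LinearMap.id hFsurj
  have hsecid : ∀ z, F (sec z) = z := by
    intro z
    have := LinearMap.ext_iff.mp hsec z
    simpa using this
  have hsecinj : Function.Injective sec := by
    intro x y hxy
    rw [← hsecid x, ← hsecid y, hxy]
  obtain ⟨i0, hi0⟩ : ∃ i, sec sh i ≠ 0 := by
    by_contra hcon
    push_neg at hcon
    have h1 : sec sh = 0 := funext hcon
    exact hsh0 (by rw [← hsecid sh, h1, map_zero])
  set f : P →ₗ[A] A := (LinearMap.proj i0).comp sec with hfdef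
  have hfsh : f sh ≠ 0 := hi0
  have hfinj : Function.Injective f := hKI A f hfsh
  obtain ⟨pr, hpr⟩ := hInj.out f hfinj LinearMap.id
  refine ⟨f sh, ?_⟩
  -- key induction for the backward direction
  have hkey : ∀ (s : ℕ) (N : Type) [AddCommGroup N] [Module k N]
      [Module A N] [IsScalarTower k A N] [FiniteDimensional k N],
      s ≤ Module.finrank k (LinearMap.range (evalAt (k := k) (A := A) N sh)) →
      ∃ Φ : (Fin s → P) →ₗ[A] N, Function.Injective Φ := by
    intro s
    induction s with
    | zero =>
      intro N _ _ _ _ _ _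
      exact ⟨0, fun x y _ => funext fun i => i.elim0⟩
    | succ s ih =>
      intro N _ _ _ _ _ hrk
      have hne : LinearMap.range (evalAt (k := k) (A := A) N sh) ≠ ⊥ := by
        intro hc
        rw [hc, finrank_bot] at hrk
        omega
      obtain ⟨v, hvmem, hv0⟩ := (Submodule.ne_bot_iff _).mp hne
      obtain ⟨h1, hh1⟩ := hvmem
      have hinj1 : Function.Injective h1 := by
        refine hKI N h1 ?_
        rw [show h1 sh = v from hh1]
        exact hv0
      obtain ⟨π1, hπ1⟩ := hInj.out h1 hinj1 LinearMap.id
      set N' := LinearMap.ker π1 with hN'def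
      haveI : FiniteDimensional k ↥N' := FiniteDimensional.of_injective
        ((N'.subtype).restrictScalars k) Subtype.val_injective
      have hbound : Module.finrank k (LinearMap.range (evalAt (k := k) (A := A) N sh)) ≤
          1 + Module.finrank k (LinearMap.range (evalAt (k := k) (A := A) (↥N') sh)) := by
        have hle : LinearMap.range (evalAt (k := k) (A := A) N sh) ≤
            (Submodule.span k {h1 sh}) ⊔
              Submodule.map ((N'.subtype).restrictScalars k)
                (LinearMap.range (evalAt (k := k) (A := A) (↥N') sh)) := by
          rintro x ⟨q, rfl⟩
          obtain ⟨c, hc⟩ := hSchur (π1.comp q)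
          have hcq : π1 (q sh) = c • sh := by
            have := hc sh hshS
            simpa using this
          have hmem2 : ∀ p : P, q p - h1 (π1 (q p)) ∈ N' := by
            intro p
            simp only [hN'def, LinearMap.mem_ker, map_sub]
            rw [hπ1 (π1 (q p))]
            simp
          set q2 : P →ₗ[A] ↥N' :=
            (q - h1.comp (π1.comp q)).codRestrict N' (fun p => by
              simpa using hmem2 p) with hq2def
          have hx : evalAt (k := k) (A := A) N sh q =
              c • (h1 sh) + ((N'.subtype).restrictScalars k) (q2 sh) := by
            show q sh = c • h1 sh + _
            have h5 : (((N'.subtype).restrictScalars k) (q2 sh) : N) =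
                q sh - h1 (π1 (q sh)) := rfl
            rw [h5, hcq, LinearMap.map_smul_of_tower]
            abel
          rw [hx]
          apply Submodule.add_mem_sup
          · exact Submodule.smul_mem _ c (Submodule.mem_span_singleton_self _)
          · exact Submodule.mem_map_of_mem ⟨q2, rfl⟩
        have hsup := Submodule.finrank_sup_add_finrank_inf_eq
          (Submodule.span k {h1 sh})
          (Submodule.map ((N'.subtype).restrictScalars k)
            (LinearMap.range (evalAt (k := k) (A := A) (↥N') sh)))
        have h1span : Module.finrank k (Submodule.span k {h1 sh}) = 1 := by
          apply finrank_span_singleton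
          rw [show h1 sh = v from hh1]
          exact hv0
        have hmapeq : Module.finrank k (Submodule.map ((N'.subtype).restrictScalars k)
            (LinearMap.range (evalAt (k := k) (A := A) (↥N') sh))) =
            Module.finrank k (LinearMap.range (evalAt (k := k) (A := A) (↥N') sh)) :=
          (LinearEquiv.finrank_eq (Submodule.equivMapOfInjective _
            Subtype.val_injective _)).symm
        have hmono := Submodule.finrank_mono hle
        omega
      have hs' : s ≤ Module.finrank k (LinearMap.range (evalAt (k := k) (A := A) (↥N') sh)) := by
        omega
      obtain ⟨ψ, hψ⟩ := ih (↥N') hs'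
      set Φ : (Fin (s+1) → P) →ₗ[A] N := h1.comp (LinearMap.proj 0) +
        (N'.subtype.comp ψ).comp (LinearMap.funLeft A P Fin.succ) with hΦdef
      refine ⟨Φ, ?_⟩
      have hzero : ∀ x : Fin (s+1) → P, Φ x = 0 → x = 0 := by
        intro x hx
        have hx' : h1 (x 0) + N'.subtype (ψ (x ∘ Fin.succ)) = 0 := by
          simpa [hΦdef, LinearMap.funLeft_apply, Function.comp,
            show (LinearMap.funLeft A P Fin.succ) x = x ∘ Fin.succ from rfl] using hx
        have h0 : x 0 = 0 := by
          have h6 := congrArg π1 hx'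
          simp only [map_add, map_zero] at h6
          rw [hπ1 (x 0)] at h6
          have h7 : π1 (N'.subtype (ψ (x ∘ Fin.succ))) = 0 :=
            LinearMap.mem_ker.mp (ψ (x ∘ Fin.succ)).2
          rw [h7] at h6
          simpa using h6
        have h8 : N'.subtype (ψ (x ∘ Fin.succ)) = 0 := by
          rw [h0, map_zero, zero_add] at hx'
          exact hx'
        have h9 : ψ (x ∘ Fin.succ) = 0 := Subtype.ext (by simpa using h8)
        have h10 : (x ∘ Fin.succ) = 0 := hψ (by rw [h9, map_zero])
        funext j
        refine Fin.cases ?_ ?_ j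
        · exact h0
        · intro i
          exact congrFun h10 i
      intro x y hxy
      have := hzero (x - y) (by rw [map_sub, hxy, sub_self])
      rwa [sub_eq_zero] at this
  -- now fix N and s
  intro N _ _ _ _ _ s
  have hrange : LinearMap.range (uAct (k := k) (f sh) N) =
      LinearMap.range (evalAt (k := k) (A := A) N sh) := by
    apply le_antisymm
    · rintro x ⟨y, rfl⟩
      refine ⟨(LinearMap.toSpanSingleton A N y).comp f, ?_⟩
      show ((LinearMap.toSpanSingleton A N y).comp f) sh = f sh • y
      simp [LinearMap.toSpanSingleton_apply]
    · rintro x ⟨q, rfl⟩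
      refine ⟨(q.comp pr) 1, ?_⟩
      show f sh • (q.comp pr) 1 = q sh
      calc f sh • (q.comp pr) 1 = (q.comp pr) (f sh • (1:A)) :=
            (map_smul (q.comp pr) (f sh) 1).symm
        _ = (q.comp pr) (f sh) := by rw [smul_eq_mul, mul_one]
        _ = q sh := by simp [LinearMap.comp_apply, hpr sh]
  constructor
  · rintro ⟨Φ, hΦ⟩
    rw [hrange]
    set v : Fin s → N := fun i => Φ ((Pi.single (M := fun _ => P) i sh)) with hvdef
    have hvmem : ∀ i, v i ∈ LinearMap.range (evalAt (k := k) (A := A) N sh) := by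
      intro i
      exact ⟨Φ.comp (LinearMap.single A (fun _ => P) i), rfl⟩
    have hvind : LinearIndependent k v := by
      rw [Fintype.linearIndependent_iff]
      intro c hc
      have hsum : ∑ i, c i • v i = Φ (fun j => c j • sh) := by
        rw [hvdef]
        calc ∑ i, c i • Φ ((Pi.single (M := fun _ => P) i sh)) = ∑ i, Φ (c i • (Pi.single (M := fun _ => P) i sh)) := by
              simp [LinearMap.map_smul_of_tower]
          _ = Φ (∑ i, c i • (Pi.single (M := fun _ => P) i sh)) := (map_sum Φ _ _).symm
          _ = Φ (fun j => c j • sh) := by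
              congr 1
              funext j
              simp [Finset.sum_apply, Pi.single_apply, smul_ite, Finset.sum_ite_eq']
      have h11 : Φ (fun j => c j • sh) = Φ 0 := by
        rw [← hsum, hc, map_zero]
      have hc0 := hΦ h11
      intro i
      have h12 := congrFun hc0 i
      simp only [Pi.zero_apply] at h12
      rcases smul_eq_zero.mp h12 with h | h
      · exact h
      · exact absurd h hsh0
    calc s = Fintype.card (Fin s) := by simp
      _ = Module.finrank k (Submodule.span k (Set.range v)) :=
          (finrank_span_eq_card hvind).symm
      _ ≤ _ := Submodule.finrank_mono (Submodule.span_le.mpr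
          (Set.range_subset_iff.mpr hvmem))
  · intro hs
    rw [hrange] at hs
    exact hkey s N hs

end CoreThm
section Glue

lemma my_aeval_eq_eval {k : Type} [CommSemiring k] {ι : Type} (x : ι → k)
    (p : MvPolynomial ι k) : MvPolynomial.aeval x p = MvPolynomial.eval x p := by
  rw [← MvPolynomial.coe_aeval_eq_eval]
  rfl

lemma lift_surjective_of_adjoin {k A : Type} [CommSemiring k] [Semiring A] [Algebra k A]
    {t : ℕ} (gen : Fin t → A) (hgen : Algebra.adjoin k (Set.range gen) = ⊤) :
    Function.Surjective (FreeAlgebra.lift k gen) := by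
  rw [← AlgHom.range_eq_top]
  rw [eq_top_iff, ← hgen]
  apply Algebra.adjoin_le
  rintro _ ⟨i, rfl⟩
  exact ⟨FreeAlgebra.ι k i, by simp⟩

lemma algHom_ext_gen {k A B : Type} [CommSemiring k] [Semiring A] [Algebra k A] [Semiring B]
    [Algebra k B] {t : ℕ} {gen : Fin t → A} (hgen : Algebra.adjoin k (Set.range gen) = ⊤)
    {φ ψ : A →ₐ[k] B} (h : ∀ i, φ (gen i) = ψ (gen i)) : φ = ψ := by
  have hle : Algebra.adjoin k (Set.range gen) ≤ AlgHom.equalizer φ ψ :=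
    Algebra.adjoin_le (by rintro _ ⟨i, rfl⟩; exact h i)
  rw [hgen] at hle
  ext a
  exact hle (Algebra.mem_top : a ∈ (⊤ : Subalgebra k A))

lemma exists_factor {k A B : Type} [CommRing k] [Ring A] [Algebra k A] [Ring B] [Algebra k B]
    {t : ℕ} (gen : Fin t → A) (hgen : Algebra.adjoin k (Set.range gen) = ⊤)
    (g : FreeAlgebra k (Fin t) →ₐ[k] B)
    (hker : ∀ x, FreeAlgebra.lift k gen x = 0 → g x = 0) :
    ∃ ρ : A →ₐ[k] B, ∀ i, ρ (gen i) = g (FreeAlgebra.ι k i) := by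
  have hsurj := lift_surjective_of_adjoin gen hgen
  have key : ∀ x y : FreeAlgebra k (Fin t),
      FreeAlgebra.lift k gen x = FreeAlgebra.lift k gen y → g x = g y := by
    intro x y h
    have h0 : FreeAlgebra.lift k gen (x - y) = 0 := by rw [map_sub, h, sub_self]
    have h1 := hker _ h0
    rw [map_sub, sub_eq_zero] at h1
    exact h1
  have hinv : ∀ a : A, FreeAlgebra.lift k gen (Function.surjInv hsurj a) = a :=
    fun a => Function.surjInv_eq hsurj a
  refine ⟨{ toFun := fun a => g (Function.surjInv hsurj a)
            map_one' := by
              show g _ = 1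
              rw [key _ 1 (by rw [hinv, map_one]), map_one]
            map_mul' := fun a b => by
              show g _ = g _ * g _
              rw [key (Function.surjInv hsurj (a*b))
                    (Function.surjInv hsurj a * Function.surjInv hsurj b)
                    (by rw [hinv, map_mul, hinv, hinv]), map_mul]
            map_zero' := by
              show g _ = 0
              rw [key _ 0 (by rw [hinv, map_zero]), map_zero]
            map_add' := fun a b => by
              show g _ = g _ + g _
              rw [key (Function.surjInv hsurj (a+b))
                    (Function.surjInv hsurj a + Function.surjInv hsurj b)
                    (by rw [hinv, map_add, hinv, hinv]), map_add]
            commutes' := fun c => by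
              show g _ = _
              rw [key _ (algebraMap k (FreeAlgebra k (Fin t)) c)
                    (by rw [hinv, AlgHom.commutes]), AlgHom.commutes] },
    fun i => ?_⟩
  show g (Function.surjInv hsurj (gen i)) = g (FreeAlgebra.ι k i)
  exact key _ _ (by rw [hinv, FreeAlgebra.lift_ι_apply])

end Glue
section Bridge

open TensorProduct

variable {k : Type} [CommRing k] {A : Type} [Ring A] [HopfAlgebra k A]
variable {V W : Type} [AddCommGroup V] [Module k V] [AddCommGroup W] [Module k W]

/-- The tensor product representation, as an algebra homomorphism. -/
noncomputable def repTensor (ρ : A →ₐ[k] Module.End k V) (σ : A →ₐ[k] Module.End k W) :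
    A →ₐ[k] Module.End k (V ⊗[k] W) :=
  ((Module.endTensorEndAlgHom (R := k) (S := k) (A := k) (M := V) (N := W)).comp
    (Algebra.TensorProduct.map ρ σ)).comp (Bialgebra.comulAlgHom k A)

lemma tensorRep_eq_repTensor (ρ : A →ₐ[k] Module.End k V) (σ : A →ₐ[k] Module.End k W)
    (a : A) : tensorRep ρ.toLinearMap σ.toLinearMap a = repTensor ρ σ a := by
  have hlin : TensorProduct.lift ((TensorProduct.mapBilinear (RingHom.id k) V W V W).compl₁₂
      ρ.toLinearMap σ.toLinearMap) =
      ((Module.endTensorEndAlgHom (R := k) (S := k) (A := k) (M := V) (N := W)).comp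
        (Algebra.TensorProduct.map ρ σ)).toLinearMap := by
    apply TensorProduct.ext'
    intro x y
    simp only [TensorProduct.lift.tmul, LinearMap.compl₁₂_apply,
      TensorProduct.mapBilinear_apply, AlgHom.comp_toLinearMap, LinearMap.coe_comp,
      Function.comp_apply, AlgHom.toLinearMap_apply, Algebra.TensorProduct.map_tmul,
      Module.endTensorEndAlgHom_apply]
    apply TensorProduct.ext'
    intro v w
    simp
  show (TensorProduct.lift _).comp (Coalgebra.comul (R := k) (A := A)) a = _
  rw [LinearMap.comp_apply, hlin]
  simp [repTensor, Bialgebra.comulAlgHom_apply]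
  rfl

end Bridge
set_option maxHeartbeats 2000000 in
theorem no_projective_submodule_is_closed
    (k : Type) [Field k] [IsAlgClosed k]
    (A : Type) [Ring A] [HopfAlgebra k A] [FiniteDimensional k A]
    -- `A` is cocommutative and self-injective
    (hcc : ∀ a : A, (TensorProduct.comm k A A) (Coalgebra.comul a) = Coalgebra.comul a)
    (self_inj : ∀ (N : Type) [AddCommGroup N] [Module A N],
      Module.Projective A N ↔ Module.Injective A N)
    -- a fixed finite generating set `a_1, …, a_t` of `A`
    (t : ℕ) (gen : Fin t → A) (hgen : Algebra.adjoin k (Set.range gen) = ⊤)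
    (n : ℕ) (hn : 1 ≤ n)
    -- the fixed module `M`
    (VM : Type) [AddCommGroup VM] [Module k VM] [FiniteDimensional k VM]
    (ρM : A →ₐ[k] Module.End k VM)
    -- the indecomposable projective module `P`
    (VP : Type) [AddCommGroup VP] [Module k VP] [FiniteDimensional k VP]
    (τP : A →ₐ[k] Module.End k VP) (hPproj : RepProjective τP)
    (hPind : letI : Module A VP := Module.compHom VP τP.toRingHom;
      ∀ N N' : Submodule A VP, IsCompl N N' → N = ⊥ ∨ N' = ⊥)
    (s : ℕ) :
    -- `𝒱_n`: tuples of matrices satisfying the defining relations of `A`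
    ∀ Vn : Set (Fin t → Matrix (Fin n) (Fin n) k),
      Vn = {σ | ∀ x : FreeAlgebra k (Fin t),
        FreeAlgebra.lift k gen x = 0 →
          FreeAlgebra.lift k (fun i => (σ i).mulVecLin) x = 0} →
    -- `𝒲`: the locus where `M ⊗ L_σ` has no submodule isomorphic to `P^{⊕ s}`
    ∀ W : Set (Fin t → Matrix (Fin n) (Fin n) k),
      W = {σ | σ ∈ Vn ∧ ∀ ρσ : A →ₐ[k] Module.End k (Fin n → k),
        (∀ i, ρσ (gen i) = (σ i).mulVecLin) →
          ¬ ∃ φ : (Fin s → VP) →ₗ[k] VM ⊗[k] (Fin n → k),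
            Function.Injective φ ∧
              ∀ (a : A) (x : Fin s → VP),
                φ (fun j => τP a (x j)) =
                  tensorRep ρM.toLinearMap ρσ.toLinearMap a (φ x)} →
    ∃ C : Set (Fin t × Fin n × Fin n → k),
      IsZariskiClosed C ∧ W = Vn ∩ {σ | matCoords t n σ ∈ C} := by
  intro Vn hVn W hW
  classical
  letI : Module A VP := Module.compHom VP τP.toRingHom
  haveI hTowerP : IsScalarTower k A VP :=
    ⟨fun c a v => by
      change τP (c • a) v = c • (τP a v)
      rw [map_smul]
      rfl⟩
  have hsurj : Function.Surjective (FreeAlgebra.lift k gen) :=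
    lift_surjective_of_adjoin gen hgen
  have hcanon : ∀ σ ∈ Vn, ∃ ρ : A →ₐ[k] Module.End k (Fin n → k),
      ∀ i, ρ (gen i) = (σ i).mulVecLin := by
    intro σ hσ
    obtain ⟨ρ, hρ⟩ := exists_factor gen hgen
      (FreeAlgebra.lift k fun i => (σ i).mulVecLin)
      (by
        intro x hx
        have hmem : σ ∈ {σ | ∀ x : FreeAlgebra k (Fin t),
            FreeAlgebra.lift k gen x = 0 →
              FreeAlgebra.lift k (fun i => (σ i).mulVecLin) x = 0} := hVn ▸ hσ
        exact hmem x hx)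
    refine ⟨ρ, fun i => by rw [hρ i]; simp⟩
  by_cases hVP : Subsingleton VP
  · -- degenerate case : `W = ∅`
    refine ⟨{x | ∀ p ∈ ({1} : Set (MvPolynomial (Fin t × Fin n × Fin n) k)),
        MvPolynomial.eval x p = 0}, ⟨{1}, rfl⟩, ?_⟩
    have hWempty : W = ∅ := by
      rw [hW]
      ext σ
      simp only [Set.mem_setOf_eq, Set.mem_empty_iff_false, iff_false, not_and]
      intro hσVn hforall
      obtain ⟨ρ, hρ⟩ := hcanon σ hσVn
      refine hforall ρ hρ ⟨0, Function.injective_of_subsingleton _, ?_⟩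
      intro a x
      simp
    rw [hWempty]
    ext σ
    simp only [Set.mem_empty_iff_false, false_iff, Set.mem_inter_iff, Set.mem_setOf_eq,
      Set.mem_singleton_iff, not_and]
    intro _
    intro hall
    have := hall 1 rfl
    simp at this
  · haveI : Nontrivial VP := not_subsingleton_iff_nontrivial.mp hVP
    have hProj : Module.Projective A VP := hPproj
    have hInj : Module.Injective A VP := (self_inj VP).mp hProj
    obtain ⟨u, hu⟩ := core_criterion (k := k) (A := A) (P := VP) hInj hProj hPind
    obtain ⟨Sf, hSf⟩ := TensorProduct.exists_finset (Coalgebra.comul (R := k) u)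
    set d := Module.finrank k VM with hd
    set bM := Module.finBasis k VM with hbM
    set bn := Pi.basisFun k (Fin n) with hbn
    set bN := bM.tensorProduct bn with hbN
    set zc : A → FreeAlgebra k (Fin t) := Function.surjInv hsurj with hzc
    set B := MvPolynomial (Fin t × Fin n × Fin n) k with hB
    set G : Fin t → Matrix (Fin n) (Fin n) B :=
      fun i => Matrix.of fun α β => MvPolynomial.X (i, α, β) with hG
    set Zf : FreeAlgebra k (Fin t) →ₐ[k] Matrix (Fin n) (Fin n) B :=
      FreeAlgebra.lift k G with hZf
    set pE : (Fin d × Fin n) → (Fin d × Fin n) → B :=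
      fun I J => ∑ r ∈ Sf,
        MvPolynomial.C (LinearMap.toMatrix bM bM (ρM r.1) I.1 J.1) *
          (Zf (zc r.2)) I.2 J.2 with hpE
    set T : Set B :=
      {q | ∃ fg : (Fin s → Fin d × Fin n) × (Fin s → Fin d × Fin n),
        q = Matrix.det (Matrix.of fun a b => pE (fg.1 a) (fg.2 b))} with hT
    refine ⟨{x | ∀ p ∈ T, MvPolynomial.eval x p = 0}, ⟨T, rfl⟩, ?_⟩
    ext σ
    simp only [Set.mem_inter_iff, Set.mem_setOf_eq]
    by_cases hσVn : σ ∈ Vn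
    swap
    · constructor
      · intro hσW
        rw [hW] at hσW
        exact absurd hσW.1 hσVn
      · rintro ⟨h1, -⟩
        exact absurd h1 hσVn
    obtain ⟨ρ, hρ⟩ := hcanon σ hσVn
    set Nt := VM ⊗[k] (Fin n → k) with hNt
    set ρN : A →ₐ[k] Module.End k Nt := repTensor ρM ρ with hρN
    letI : Module A Nt := Module.compHom Nt ρN.toRingHom
    haveI : IsScalarTower k A Nt := ⟨fun c a v => by
      change ρN (c • a) v = c • (ρN a v)
      rw [map_smul]
      rfl⟩
    have hsmul : ∀ (a : A) (x : Nt), a • x = ρN a x := fun a x => rfl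
    -- identify embeddings
    have hbridge : (∃ φ : (Fin s → VP) →ₗ[k] VM ⊗[k] (Fin n → k),
        Function.Injective φ ∧ ∀ (a : A) (x : Fin s → VP),
          φ (fun j => τP a (x j)) = tensorRep ρM.toLinearMap ρ.toLinearMap a (φ x)) ↔
        (∃ Φ : (Fin s → VP) →ₗ[A] Nt, Function.Injective Φ) := by
      constructor
      · rintro ⟨φ, hinj, hint⟩
        refine ⟨{ toFun := φ, map_add' := map_add φ, map_smul' := fun a x => ?_ }, hinj⟩
        show φ (a • x) = a • (φ x)
        have h1 : a • x = fun j => τP a (x j) := rfl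
        rw [h1, hint a x, tensorRep_eq_repTensor]
        exact (hsmul a (φ x)).symm
      · rintro ⟨Φ, hinj⟩
        refine ⟨Φ.restrictScalars k, hinj, fun a x => ?_⟩
        show Φ (fun j => τP a (x j)) = _
        have h1 : (fun j => τP a (x j)) = a • x := rfl
        rw [h1, map_smul, tensorRep_eq_repTensor]
        exact hsmul a (Φ x)
    have hcrit := hu Nt s
    -- the matrix of the action of u
    set Mat : Matrix (Fin d × Fin n) (Fin d × Fin n) k :=
      LinearMap.toMatrix bN bN (ρN u) with hMatdef
    have hacteq : uAct (k := k) u Nt = (ρN u : Module.End k Nt) :=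
      LinearMap.ext fun x => rfl
    have hrank : Module.finrank k (LinearMap.range (uAct (k := k) u Nt)) = Mat.rank := by
      rw [hMatdef, Matrix.rank_eq_finrank_range_toLin _ bN bN, Matrix.toLin_toMatrix, hacteq]
    -- entries are polynomial
    have hρlift : ρ.comp (FreeAlgebra.lift k gen) =
        FreeAlgebra.lift k (fun i => (σ i).mulVecLin) := by
      apply FreeAlgebra.hom_ext
      funext i
      simp [hρ i]
    have hρz : ∀ y : A, ρ y = FreeAlgebra.lift k (fun i => (σ i).mulVecLin) (zc y) := by
      intro y
      have h1 := DFunLike.congr_fun hρlift (zc y)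
      simp only [AlgHom.comp_apply] at h1
      rw [hzc, Function.surjInv_eq hsurj y] at h1
      exact h1
    have hcommute : ∀ z : FreeAlgebra k (Fin t),
        LinearMap.toMatrix bn bn (FreeAlgebra.lift k (fun i => (σ i).mulVecLin) z) =
          (Zf z).map (MvPolynomial.eval (matCoords t n σ)) := by
      have hΨ : ((MvPolynomial.aeval (R := k) (matCoords t n σ) :
            B →ₐ[k] k).mapMatrix).comp Zf =
          (LinearMap.toMatrixAlgEquiv' :
              ((Fin n → k) →ₗ[k] (Fin n → k)) ≃ₐ[k] Matrix (Fin n) (Fin n) k).toAlgHom.comp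
            (FreeAlgebra.lift k (fun i => (σ i).mulVecLin)) := by
        apply FreeAlgebra.hom_ext
        funext i
        show (MvPolynomial.aeval (matCoords t n σ)).mapMatrix (Zf (FreeAlgebra.ι k i)) =
          LinearMap.toMatrixAlgEquiv' (FreeAlgebra.lift k
            (fun i => (σ i).mulVecLin) (FreeAlgebra.ι k i))
        rw [hZf]
        simp only [FreeAlgebra.lift_ι_apply]
        have hL : LinearMap.toMatrixAlgEquiv' ((σ i).mulVecLin) = σ i := by
          show LinearMap.toMatrix' ((σ i).mulVecLin) = σ i
          rw [← Matrix.toLin'_apply', LinearMap.toMatrix'_toLin']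
        rw [hL]
        ext α β
        simp [hG, matCoords]
      intro z
      have h1 := DFunLike.congr_fun hΨ z
      simp only [AlgHom.comp_apply, AlgHom.mapMatrix_apply, AlgEquiv.toAlgHom_eq_coe,
        AlgHom.coe_coe, AlgEquiv.coe_algHom] at h1
      have h2 : LinearMap.toMatrix bn bn
          (FreeAlgebra.lift k (fun i => (σ i).mulVecLin) z) =
          LinearMap.toMatrixAlgEquiv'
            (FreeAlgebra.lift k (fun i => (σ i).mulVecLin) z) := by
        rw [hbn, LinearMap.toMatrix_eq_toMatrix']
        rfl
      rw [h2, ← h1]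
      ext α β
      simp [Matrix.map_apply, my_aeval_eq_eval]
    have hmatentry : ∀ (f : Module.End k VM) (g : Module.End k (Fin n → k))
        (I J : Fin d × Fin n),
        LinearMap.toMatrix bN bN (TensorProduct.AlgebraTensorModule.map f g) I J =
          LinearMap.toMatrix bM bM f I.1 J.1 * LinearMap.toMatrix bn bn g I.2 J.2 := by
      rintro f g ⟨i, α⟩ ⟨j, β⟩
      rw [LinearMap.toMatrix_apply, LinearMap.toMatrix_apply, LinearMap.toMatrix_apply, hbN,
        Module.Basis.tensorProduct_apply, TensorProduct.AlgebraTensorModule.map_tmul,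
        Module.Basis.tensorProduct_repr_tmul_apply]
      rw [smul_eq_mul, mul_comm]
    have hρNu : ρN u = ∑ r ∈ Sf,
        TensorProduct.AlgebraTensorModule.map (ρM r.1) (ρ r.2) := by
      have h0 : ρN u = (Module.endTensorEndAlgHom (R := k) (S := k) (A := k)
          (M := VM) (N := Fin n → k))
          ((Algebra.TensorProduct.map ρM ρ) (Coalgebra.comul (R := k) u)) := by
        rw [hρN]
        simp [repTensor, Bialgebra.comulAlgHom_apply]
      rw [h0, hSf, map_sum, map_sum]
      refine Finset.sum_congr rfl fun r _ => ?_
      rw [Algebra.TensorProduct.map_tmul, Module.endTensorEndAlgHom_apply]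
    have hentries : ∀ I J, Mat I J = MvPolynomial.eval (matCoords t n σ) (pE I J) := by
      intro I J
      rw [hMatdef, hρNu, map_sum]
      rw [Matrix.sum_apply]
      rw [hpE, map_sum]
      refine Finset.sum_congr rfl fun r _ => ?_
      rw [hmatentry, hρz r.2, hcommute (zc r.2)]
      simp [Matrix.map_apply]
    -- the minors
    have hminor : ∀ (f g : Fin s → Fin d × Fin n),
        MvPolynomial.eval (matCoords t n σ)
            (Matrix.det (Matrix.of fun a b => pE (f a) (g b))) =
          (Mat.submatrix f g).det := by
      intro f g
      rw [RingHom.map_det]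
      congr 1
      ext a b
      simp only [RingHom.mapMatrix_apply, Matrix.map_apply, Matrix.of_apply,
        Matrix.submatrix_apply]
      rw [hentries]
    -- put everything together
    have hWmem : σ ∈ W ↔ ¬ ∃ φ : (Fin s → VP) →ₗ[k] VM ⊗[k] (Fin n → k),
        Function.Injective φ ∧ ∀ (a : A) (x : Fin s → VP),
          φ (fun j => τP a (x j)) = tensorRep ρM.toLinearMap ρ.toLinearMap a (φ x) := by
      rw [hW]
      simp only [Set.mem_setOf_eq]
      constructor
      · rintro ⟨-, hforall⟩
        exact hforall ρ hρ
      · intro hne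
        refine ⟨hσVn, fun ρσ hρσ => ?_⟩
        have : ρσ = ρ := algHom_ext_gen hgen (fun i => by rw [hρσ i, hρ i])
        rw [this]
        exact hne
    rw [hWmem, hbridge, hcrit, hrank]
    have hchain : ¬ s ≤ Mat.rank ↔ matCoords t n σ ∈
        {x | ∀ p ∈ T, MvPolynomial.eval x p = 0} := by
      rw [not_le, my_rank_lt_iff_minors]
      constructor
      · rintro h p ⟨⟨f, g⟩, rfl⟩
        show MvPolynomial.eval (matCoords t n σ)
          (Matrix.det (Matrix.of fun a b => pE (f a) (g b))) = 0
        rw [hminor]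
        exact h f g
      · intro h f g
        rw [← hminor]
        exact h _ ⟨(f, g), rfl⟩
    rw [hchain]
    simp [hσVn]
end
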